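/- arXiv:0806.0721 — 14 statements merged into one kernel-verified Lean document; each statement's English description precedes it below -/
import Mathlib

section
/- Let f, g, h : ℕ → ℚ satisfy f(0)=3, g(0)=1, h(0)=1 and the recursions f(n+1)=6·f(n)²·g(n), g(n+1)=f(n)²·h(n)+7·f(n)·g(n)², h(n+1)=12·f(n)·g(n)·h(n)+14·g(n)³ for all n ≥ 0. Then for every n ≥ 0 one has 3·g(n)² = f(n)·h(n), and consequently g(n+1)=10·f(n)·g(n)² = (10/3)·f(n)²·h(n) and h(n+1)=50·g(n)³ = (50/3)·f(n)·g(n)·h(n). -/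
/-- The spanning-tree / forest counts `f`, `g`, `h` of the Sierpinski gasket `SG(n)`
satisfy `3 g(n)² = f(n) h(n)`, hence the simplified recursions for `g` and `h`. -/
theorem stmt_0 (f g h : ℕ → ℚ)
    (hf0 : f 0 = 3) (hg0 : g 0 = 1) (hh0 : h 0 = 1)
    (hf : ∀ n, f (n + 1) = 6 * (f n) ^ 2 * g n)
    (hg : ∀ n, g (n + 1) = (f n) ^ 2 * h n + 7 * f n * (g n) ^ 2)
    (hh : ∀ n, h (n + 1) = 12 * f n * g n * h n + 14 * (g n) ^ 3) :
    ∀ n : ℕ,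
      3 * (g n) ^ 2 = f n * h n ∧
      g (n + 1) = 10 * f n * (g n) ^ 2 ∧
      g (n + 1) = (10 / 3) * (f n) ^ 2 * h n ∧
      h (n + 1) = 50 * (g n) ^ 3 ∧
      h (n + 1) = (50 / 3) * f n * g n * h n := by
  have key : ∀ n, 3 * (g n) ^ 2 = f n * h n := by
    intro n
    induction n with
    | zero => rw [hf0, hg0, hh0]; norm_num
    | succ k ih =>
      rw [hf k, hg k, hh k]
      linear_combination (3 * (f k) ^ 2 * (7 * (g k) ^ 2 - f k * h k)) * ih
  intro n
  have k := key n
  refine ⟨k, ?_, ?_, ?_, ?_⟩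
  · rw [hg n]; linear_combination (-f n) * k
  · rw [hg n]; linear_combination (7 * f n / 3) * k
  · rw [hh n]; linear_combination (-12 * g n) * k
  · rw [hh n]; linear_combination (14 * g n / 3) * k
end

section
/- Let f, g, h : ℕ → ℚ satisfy f(0)=3, g(0)=1, h(0)=1 and the recursions f(n+1)=6·f(n)²·g(n), g(n+1)=f(n)²·h(n)+7·f(n)·g(n)², h(n+1)=12·f(n)·g(n)·h(n)+14·g(n)³ for all n ≥ 0. Then for every n ≥ 0, f(n) = 2^{α(n)}·3^{β(n)}·5^{γ(n)}, where α(n)=(3^n−1)/2, β(n)=(3^{n+1}+2n+1)/4 and γ(n)=(3^n−2n−1)/4 (these are natural numbers for every n). -/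
/-- The number of spanning trees of `SG(n)` is `2^α(n) 3^β(n) 5^γ(n)` with
`α(n) = (3^n - 1)/2`, `β(n) = (3^(n+1) + 2n + 1)/4`, `γ(n) = (3^n - 2n - 1)/4`,
which are natural numbers for every `n`. -/
theorem stmt_1 (f g h : ℕ → ℚ)
    (hf0 : f 0 = 3) (hg0 : g 0 = 1) (hh0 : h 0 = 1)
    (hf : ∀ n, f (n + 1) = 6 * (f n) ^ 2 * g n)
    (hg : ∀ n, g (n + 1) = (f n) ^ 2 * h n + 7 * f n * (g n) ^ 2)
    (hh : ∀ n, h (n + 1) = 12 * f n * g n * h n + 14 * (g n) ^ 3) :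
    ∀ n : ℕ, ∃ α β γ : ℕ,
      2 * α + 1 = 3 ^ n ∧
      4 * β = 3 ^ (n + 1) + 2 * n + 1 ∧
      4 * γ + 2 * n + 1 = 3 ^ n ∧
      f n = 2 ^ α * 3 ^ β * 5 ^ γ := by
  have key : ∀ n : ℕ, ∃ α b γ : ℕ,
      2 * α + 1 = 3 ^ n ∧
      4 * (b + 2 * n + 1) = 3 ^ (n + 1) + 2 * n + 1 ∧
      4 * γ + 2 * n + 1 = 3 ^ n ∧
      f n = 2 ^ α * 3 ^ (b + 2 * n + 1) * 5 ^ γ ∧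
      g n = 2 ^ α * 3 ^ (b + n) * 5 ^ (γ + n) ∧
      h n = 2 ^ α * 3 ^ b * 5 ^ (γ + 2 * n) := by
    intro n
    induction n with
    | zero =>
      refine ⟨0, 0, 0, by norm_num, by norm_num, by norm_num, ?_, ?_, ?_⟩ <;>
        simp [hf0, hg0, hh0]
    | succ n ih =>
      obtain ⟨α, b, γ, hα, hb, hγ, hfe, hge, hhe⟩ := ih
      have h3 : (3:ℕ) ^ (n + 1) = 3 * 3 ^ n := by ring
      have h33 : (3:ℕ) ^ (n + 1 + 1) = 3 * 3 ^ (n + 1) := by ring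
      refine ⟨3 * α + 1, 3 * b + 3 * n, 3 * γ + n, by omega, by omega, by omega, ?_, ?_, ?_⟩
      · rw [hf n, hfe, hge]
        simp only [pow_add, pow_mul', pow_succ, pow_zero, pow_one]
        ring
      · rw [hg n, hfe, hge, hhe]
        simp only [pow_add, pow_mul', pow_succ, pow_zero, pow_one]
        ring
      · rw [hh n, hfe, hge, hhe]
        simp only [pow_add, pow_mul', pow_succ, pow_zero, pow_one]
        ring
  intro n
  obtain ⟨α, b, γ, hα, hb, hγ, hfe, _, _⟩ := key n
  exact ⟨α, b + 2 * n + 1, γ, hα, hb, hγ, hfe⟩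
end

section
/- Let f, g, h : ℕ → ℚ satisfy f(0)=3, g(0)=1, h(0)=1 and f(n+1)=6·f(n)²·g(n), g(n+1)=f(n)²·h(n)+7·f(n)·g(n)², h(n+1)=12·f(n)·g(n)·h(n)+14·g(n)³. Let f1, g1, f2, g2 : ℕ → ℚ satisfy f1(0)=2, g1(0)=1, f2(0)=1, g2(0)=0 and, for j=1,2, fj(n+1)=4·fj(n)·f(n)·g(n)+2·gj(n)·f(n)² and gj(n+1)=fj(n)·f(n)·h(n)+3·fj(n)·g(n)²+4·gj(n)·f(n)·g(n). Then for every n ≥ 0: f1(n) = (11/14 − (5/42)·(1/15)^n)·2^{α(n)}·3^{β(n)}·5^{γ(n)} and f2(n) = (3/14 + (5/42)·(1/15)^n)·2^{α(n)}·3^{β(n)}·5^{γ(n)}, where α(n)=(3^n−1)/2, β(n)=(3^{n+1}+2n+1)/4, γ(n)=(3^n−2n−1)/4; moreover the real sequences f1(n)/f(n) and f2(n)/f(n) converge to 11/14 and 3/14 respectively as n → ∞. -/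
private def pA : ℕ → ℕ
  | 0 => 0
  | n + 1 => 3 * pA n + 1

private def pB : ℕ → ℕ
  | 0 => 1
  | n + 1 => 3 * pB n - n

private def pC : ℕ → ℕ
  | 0 => 0
  | n + 1 => 3 * pC n + n

private lemma hpA : ∀ n, 2 * pA n + 1 = 3 ^ n := by
  intro n
  induction n with
  | zero => simp [pA]
  | succ n ih =>
    have : (3:ℕ) ^ (n+1) = 3 * 3 ^ n := by ring
    rw [this, ← ih]; simp [pA]; ring

private lemma hpB : ∀ n, 4 * pB n = 3 ^ (n + 1) + 2 * n + 1 := by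
  intro n
  induction n with
  | zero => simp [pB]
  | succ n ih =>
    have h3 : (3:ℕ) ^ (n+1+1) = 3 * 3 ^ (n+1) := by ring
    have h1 : (3:ℕ) ^ (n+1) ≥ 3 := by
      calc (3:ℕ)^(n+1) ≥ 3^1 := Nat.pow_le_pow_right (by norm_num) (by omega)
      _ = 3 := by norm_num
    show 4 * (3 * pB n - n) = _
    omega

private lemma hpC : ∀ n, 4 * pC n + 2 * n + 1 = 3 ^ n := by
  intro n
  induction n with
  | zero => simp [pC]
  | succ n ih =>
    have : (3:ℕ) ^ (n+1) = 3 * 3 ^ n := by ring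
    show 4 * (3 * pC n + n) + 2 * (n+1) + 1 = _
    omega

set_option maxHeartbeats 1600000 in
/-- Closed form of the spanning-tree counts `f_1(n,o)`, `f_2(n,o)` with prescribed
degree at the corner vertex `o` of `SG(n)`, and the limiting probabilities
`F_1(n,o) → 11/14`, `F_2(n,o) → 3/14`. -/
theorem stmt_4 (f g h f1 g1 f2 g2 : ℕ → ℚ)
    (hf0 : f 0 = 3) (hg0 : g 0 = 1) (hh0 : h 0 = 1)
    (hf : ∀ n, f (n + 1) = 6 * (f n) ^ 2 * g n)
    (hg : ∀ n, g (n + 1) = (f n) ^ 2 * h n + 7 * f n * (g n) ^ 2)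
    (hh : ∀ n, h (n + 1) = 12 * f n * g n * h n + 14 * (g n) ^ 3)
    (hf10 : f1 0 = 2) (hg10 : g1 0 = 1) (hf20 : f2 0 = 1) (hg20 : g2 0 = 0)
    (hf1 : ∀ n, f1 (n + 1) = 4 * f1 n * f n * g n + 2 * g1 n * (f n) ^ 2)
    (hg1 : ∀ n, g1 (n + 1) = f1 n * f n * h n + 3 * f1 n * (g n) ^ 2 + 4 * g1 n * f n * g n)
    (hf2 : ∀ n, f2 (n + 1) = 4 * f2 n * f n * g n + 2 * g2 n * (f n) ^ 2)
    (hg2 : ∀ n, g2 (n + 1) = f2 n * f n * h n + 3 * f2 n * (g n) ^ 2 + 4 * g2 n * f n * g n) :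
    (∀ n : ℕ, ∃ α β γ : ℕ,
      2 * α + 1 = 3 ^ n ∧
      4 * β = 3 ^ (n + 1) + 2 * n + 1 ∧
      4 * γ + 2 * n + 1 = 3 ^ n ∧
      f1 n = (11 / 14 - (5 / 42) * (1 / 15) ^ n) * (2 ^ α * 3 ^ β * 5 ^ γ) ∧
      f2 n = (3 / 14 + (5 / 42) * (1 / 15) ^ n) * (2 ^ α * 3 ^ β * 5 ^ γ)) ∧
    Filter.Tendsto (fun n : ℕ => ((f1 n / f n : ℚ) : ℝ)) Filter.atTop (nhds (11 / 14)) ∧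
    Filter.Tendsto (fun n : ℕ => ((f2 n / f n : ℚ) : ℝ)) Filter.atTop (nhds (3 / 14)) := by
  -- the main induction
  have main : ∀ n : ℕ,
      f n = 2 ^ (pA n) * 3 ^ (pB n) * 5 ^ (pC n) ∧
      g n = f n * 5 ^ n / (3 * 3 ^ n) ∧
      h n = f n * (5 ^ n * 5 ^ n) / (3 * (3 ^ n * 3 ^ n)) ∧
      f1 n = (11 / 14 - (5 / 42) * (1 / (3 ^ n * 5 ^ n))) * f n ∧
      g1 n = (11 / 14 + (3 / 14) * (1 / (3 ^ n * 5 ^ n))) * g n ∧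
      f2 n = (3 / 14 + (5 / 42) * (1 / (3 ^ n * 5 ^ n))) * f n ∧
      g2 n = (3 / 14 - (3 / 14) * (1 / (3 ^ n * 5 ^ n))) * g n := by
    intro n
    induction n with
    | zero =>
      simp [pA, pB, pC, hf0, hg0, hh0, hf10, hg10, hf20, hg20]
      norm_num
    | succ n ih =>
      obtain ⟨hF, hG, hH, hP, hQ, hR, hS⟩ := ih
      have hu : ((3:ℚ) ^ n) ≠ 0 := pow_ne_zero n (by norm_num)
      have hv : ((5:ℚ) ^ n) ≠ 0 := pow_ne_zero n (by norm_num)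
      have h3 : ((3:ℚ)) ≠ 0 := by norm_num
      -- closed form for f (n+1)
      have hBge : n ≤ 3 * pB n := by
        have := hpB n
        have h1 : (3:ℕ) ^ (n+1) ≥ 3 := by
          calc (3:ℕ)^(n+1) ≥ 3^1 := Nat.pow_le_pow_right (by norm_num) (by omega)
          _ = 3 := by norm_num
        omega
      have key : (3:ℚ) ^ (pB (n+1)) * (3 * 3 ^ n) = ((3:ℚ) ^ (pB n)) ^ 3 * 3 := by
        have e : pB (n+1) + (n+1) = pB n * 3 + 1 := by
          show (3 * pB n - n) + (n+1) = pB n * 3 + 1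
          omega
        calc (3:ℚ) ^ (pB (n+1)) * (3 * 3 ^ n) = 3 ^ (pB (n+1) + (n+1)) := by
              rw [pow_add, pow_succ]; ring
          _ = 3 ^ (pB n * 3 + 1) := by rw [e]
          _ = ((3:ℚ) ^ (pB n)) ^ 3 * 3 := by rw [pow_add, pow_mul, pow_one]
      have hFnext : f (n+1) = 2 ^ (pA (n+1)) * 3 ^ (pB (n+1)) * 5 ^ (pC (n+1)) := by
        have hmul : f (n+1) * (3 * 3 ^ n) =
            2 ^ (pA (n+1)) * 3 ^ (pB (n+1)) * 5 ^ (pC (n+1)) * (3 * 3 ^ n) := by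
          have eA : pA (n+1) = pA n * 3 + 1 := by show 3 * pA n + 1 = _; ring
          have eC : pC (n+1) = pC n * 3 + n := by show 3 * pC n + n = _; ring
          have rhs : (2:ℚ) ^ (pA (n+1)) * 3 ^ (pB (n+1)) * 5 ^ (pC (n+1)) * (3 * 3 ^ n)
              = ((2:ℚ) ^ (pA n)) ^ 3 * 2 * (((3:ℚ) ^ (pB n)) ^ 3 * 3)
                * (((5:ℚ) ^ (pC n)) ^ 3 * 5 ^ n) := by
            rw [eA, eC, pow_add, pow_mul, pow_add, pow_mul, pow_one]
            calc ((2:ℚ) ^ (pA n)) ^ 3 * 2 * 3 ^ (pB (n+1)) * (((5:ℚ) ^ (pC n)) ^ 3 * 5 ^ n)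
                  * (3 * 3 ^ n)
                = ((2:ℚ) ^ (pA n)) ^ 3 * 2 * (((5:ℚ) ^ (pC n)) ^ 3 * 5 ^ n)
                  * ((3:ℚ) ^ (pB (n+1)) * (3 * 3 ^ n)) := by ring
              _ = _ := by rw [key]; ring
          rw [rhs, hf n, hG, hF]
          field_simp
          ring
        exact mul_right_cancel₀ (by positivity) hmul
      refine ⟨hFnext, ?_, ?_, ?_, ?_, ?_, ?_⟩
      · rw [hg n, hf n, hG, hH]
        simp only [pow_succ]
        field_simp
        ring
      · rw [hh n, hf n, hG, hH]
        simp only [pow_succ]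
        field_simp
        ring
      · rw [hf1 n, hf n, hP, hQ, hG]
        simp only [pow_succ]
        field_simp
        ring
      · rw [hg1 n, hg n, hP, hQ, hG, hH]
        simp only [pow_succ]
        field_simp
        ring
      · rw [hf2 n, hf n, hR, hS, hG]
        simp only [pow_succ]
        field_simp
        ring
      · rw [hg2 n, hg n, hR, hS, hG, hH]
        simp only [pow_succ]
        field_simp
        ring
  have hpow15 : ∀ n : ℕ, ((1:ℚ)/15) ^ n = 1 / (3 ^ n * 5 ^ n) := by
    intro n
    rw [div_pow, one_pow, ← mul_pow]
    norm_num
  -- ratios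
  have hfne : ∀ n, f n ≠ 0 := by
    intro n
    rw [(main n).1]
    positivity
  have hrat1 : ∀ n, f1 n / f n = 11 / 14 - (5 / 42) * (1 / 15) ^ n := by
    intro n
    rw [(main n).2.2.2.1, hpow15 n, mul_div_assoc, div_self (hfne n), mul_one]
  have hrat2 : ∀ n, f2 n / f n = 3 / 14 + (5 / 42) * (1 / 15) ^ n := by
    intro n
    rw [(main n).2.2.2.2.2.1, hpow15 n, mul_div_assoc, div_self (hfne n), mul_one]
  have hlim : Filter.Tendsto (fun n : ℕ => ((1:ℝ)/15) ^ n) Filter.atTop (nhds 0) := by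
    apply tendsto_pow_atTop_nhds_zero_of_lt_one <;> norm_num
  refine ⟨?_, ?_, ?_⟩
  · intro n
    refine ⟨pA n, pB n, pC n, hpA n, hpB n, hpC n, ?_, ?_⟩
    · rw [(main n).2.2.2.1, hpow15 n, (main n).1]
    · rw [(main n).2.2.2.2.2.1, hpow15 n, (main n).1]
  · have : Filter.Tendsto (fun n : ℕ => (11:ℝ)/14 - (5/42) * ((1:ℝ)/15) ^ n)
        Filter.atTop (nhds (11/14)) := by
      have := (hlim.const_mul ((5:ℝ)/42)).const_sub ((11:ℝ)/14)
      simpa using this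
    refine this.congr' ?_
    filter_upwards with n
    rw [hrat1 n]
    push_cast
    norm_num
  · have : Filter.Tendsto (fun n : ℕ => (3:ℝ)/14 + (5/42) * ((1:ℝ)/15) ^ n)
        Filter.atTop (nhds (3/14)) := by
      have := (hlim.const_mul ((5:ℝ)/42)).const_add ((3:ℝ)/14)
      simpa using this
    refine this.congr' ?_
    filter_upwards with n
    rw [hrat2 n]
    push_cast
    norm_num
end

section
/- Define F1(n)=11/14−(5/42)·(1/15)^n and G1(n)=11/14+(3/14)·(1/15)^n. Let Gb, H : ℕ → ℚ satisfy Gb(0)=0, H(0)=0 and, for all n ≥ 0, Gb(n+1)=(2/5)·Gb(n)+(3/10)·H(n)+(1/10)·F1(n)+(1/5)·G1(n) and H(n+1)=(6/25)·Gb(n)+(6/25)·H(n)+(6/25)·F1(n)+(7/25)·G1(n). Then for every n ≥ 0: Gb(n) = 11/14 − (2/7)·(1/15)^n − (6/7)·(3/5)^n + (5/14)·(1/25)^n and H(n) = 11/14 + (3/14)·(1/15)^n − (4/7)·(3/5)^n − (3/7)·(1/25)^n. -/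
/-- Closed form of the degree-1 probabilities `G_1(n,b_n)` and `H_1(n,o)` on the
Sierpinski gasket `SG(n)`. -/
theorem stmt_8 (Gb H : ℕ → ℚ)
    (hGb0 : Gb 0 = 0) (hH0 : H 0 = 0)
    (hGb : ∀ n, Gb (n + 1) = (2 / 5) * Gb n + (3 / 10) * H n
      + (1 / 10) * (11 / 14 - (5 / 42) * (1 / 15) ^ n)
      + (1 / 5) * (11 / 14 + (3 / 14) * (1 / 15) ^ n))
    (hH : ∀ n, H (n + 1) = (6 / 25) * Gb n + (6 / 25) * H n
      + (6 / 25) * (11 / 14 - (5 / 42) * (1 / 15) ^ n)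
      + (7 / 25) * (11 / 14 + (3 / 14) * (1 / 15) ^ n)) :
    ∀ n : ℕ,
      Gb n = 11 / 14 - (2 / 7) * (1 / 15) ^ n - (6 / 7) * (3 / 5) ^ n
        + (5 / 14) * (1 / 25) ^ n ∧
      H n = 11 / 14 + (3 / 14) * (1 / 15) ^ n - (4 / 7) * (3 / 5) ^ n
        - (3 / 7) * (1 / 25) ^ n := by
  intro n
  induction n with
  | zero => exact ⟨by rw [hGb0]; norm_num, by rw [hH0]; norm_num⟩
  | succ k ih =>
    obtain ⟨ih1, ih2⟩ := ih
    constructor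
    · rw [hGb k, ih1, ih2]; ring
    · rw [hH k, ih1, ih2]; ring
end

section
/- Define F2(n)=3/14+(5/42)·(1/15)^n and G2(n)=3/14−(3/14)·(1/15)^n. Let Gb, H : ℕ → ℚ satisfy Gb(0)=0, H(0)=0 and, for all n ≥ 0, Gb(n+1)=(2/5)·Gb(n)+(3/10)·H(n)+(1/10)·F2(n)+(1/5)·G2(n) and H(n+1)=(6/25)·Gb(n)+(6/25)·H(n)+(6/25)·F2(n)+(7/25)·G2(n). Then for every n ≥ 0: Gb(n) = 3/14 + (2/7)·(1/15)^n − (9/28)·(3/5)^n − (5/28)·(1/25)^n and H(n) = 3/14 − (3/14)·(1/15)^n − (3/14)·(3/5)^n + (3/14)·(1/25)^n. -/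
/-- Closed form of the degree-2 probabilities `G_2(n,b_n)` and `H_2(n,o)` on the
Sierpinski gasket `SG(n)`. -/
theorem stmt_9 (Gb H : ℕ → ℚ)
    (hGb0 : Gb 0 = 0) (hH0 : H 0 = 0)
    (hGb : ∀ n, Gb (n + 1) = (2 / 5) * Gb n + (3 / 10) * H n
      + (1 / 10) * (3 / 14 + (5 / 42) * (1 / 15) ^ n)
      + (1 / 5) * (3 / 14 - (3 / 14) * (1 / 15) ^ n))
    (hH : ∀ n, H (n + 1) = (6 / 25) * Gb n + (6 / 25) * H n
      + (6 / 25) * (3 / 14 + (5 / 42) * (1 / 15) ^ n)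
      + (7 / 25) * (3 / 14 - (3 / 14) * (1 / 15) ^ n)) :
    ∀ n : ℕ,
      Gb n = 3 / 14 + (2 / 7) * (1 / 15) ^ n - (9 / 28) * (3 / 5) ^ n
        - (5 / 28) * (1 / 25) ^ n ∧
      H n = 3 / 14 - (3 / 14) * (1 / 15) ^ n - (3 / 14) * (3 / 5) ^ n
        + (3 / 14) * (1 / 25) ^ n := by
  intro n
  induction n with
  | zero => simp [hGb0, hH0]; norm_num
  | succ n ih =>
    obtain ⟨h1, h2⟩ := ih
    constructor
    · rw [hGb n, h1, h2]; ring
    · rw [hH n, h1, h2]; ring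
end

section
/- Let F, Ga, Gb : ℕ → ℚ satisfy, for all m ≥ 0, the recursions F(m+1)=(2/3)·F(m)+(1/6)·(Ga(m)+Gb(m)), Ga(m+1)=(3/5)·F(m)+(3/10)·Ga(m)+(1/10)·Gb(m), Gb(m+1)=(3/5)·F(m)+(1/10)·Ga(m)+(3/10)·Gb(m). Then for every m ≥ 0, F(m) = (9/14 + (5/14)·(1/15)^m)·F(0) + (5/28)·(1 − (1/15)^m)·(Ga(0)+Gb(0)). -/
/-- Solution of the three-dimensional linear recursion governing the interior-vertex
degree probabilities `F_j(n+m+1,a_n)`, `G_j(n+m+1,a_n)`, `G_j(n+m+1,b_n)` on the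
Sierpinski gasket, for arbitrary initial data. -/
theorem stmt_10 (F Ga Gb : ℕ → ℚ)
    (hF : ∀ m, F (m + 1) = (2 / 3) * F m + (1 / 6) * (Ga m + Gb m))
    (hGa : ∀ m, Ga (m + 1) = (3 / 5) * F m + (3 / 10) * Ga m + (1 / 10) * Gb m)
    (hGb : ∀ m, Gb (m + 1) = (3 / 5) * F m + (1 / 10) * Ga m + (3 / 10) * Gb m) :
    ∀ m : ℕ,
      F m = (9 / 14 + (5 / 14) * (1 / 15) ^ m) * F 0
        + (5 / 28) * (1 - (1 / 15) ^ m) * (Ga 0 + Gb 0) := by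
  have key : ∀ m : ℕ,
      F m = (9 / 14 + (5 / 14) * (1 / 15) ^ m) * F 0
        + (5 / 28) * (1 - (1 / 15) ^ m) * (Ga 0 + Gb 0)
      ∧ Ga m + Gb m = (9 / 7 - (9 / 7) * (1 / 15) ^ m) * F 0
        + (5 / 14 + (9 / 14) * (1 / 15) ^ m) * (Ga 0 + Gb 0) := by
    intro m
    induction m with
    | zero => constructor <;> ring
    | succ n ih =>
      obtain ⟨h1, h2⟩ := ih
      constructor
      · rw [hF n, h1, h2]; ring
      · rw [hGa n, hGb n]
        have : (3 / 5 * F n + 3 / 10 * Ga n + 1 / 10 * Gb n)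
            + (3 / 5 * F n + 1 / 10 * Ga n + 3 / 10 * Gb n)
            = (6 / 5) * F n + (2 / 5) * (Ga n + Gb n) := by ring
        rw [this, h1, h2]; ring
  exact fun m => (key m).1
end

section
/- Define the rational sequences F1(n)=11/14−(5/42)·(1/15)^n, F2(n)=3/14+(5/42)·(1/15)^n, G1(n)=11/14+(3/14)·(1/15)^n, G1b(n)=11/14−(2/7)·(1/15)^n−(6/7)·(3/5)^n+(5/14)·(1/25)^n, G0b(n)=(33/28)·(3/5)^n−(5/28)·(1/25)^n, H0(n)=(11/14)·(3/5)^n+(3/14)·(1/25)^n. Fix n ≥ 0 and let F, Ga, Gb : ℕ → ℚ satisfy F(0)=F1(n)·G0b(n)/3, Ga(0)=F1(n)·G0b(n)/5, Gb(0)=(3/10)·F1(n)·H0(n)+(1/5)·(F1(n)+G1(n))·G0b(n), together with the recursions F(m+1)=(2/3)F(m)+(1/6)(Ga(m)+Gb(m)), Ga(m+1)=(3/5)F(m)+(3/10)Ga(m)+(1/10)Gb(m), Gb(m+1)=(3/5)F(m)+(1/10)Ga(m)+(3/10)Gb(m). Then for all m ≥ 0: F(m) = (1815/5488)·(3/5)^n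 − (99/1372)·(1/25)^n + (55/16464)·(1/375)^n + (1/15)^m·( −(121/5488)·(3/5)^n − (22/1029)·(1/25)^n + (185/49392)·(1/375)^n ). -/
/-- `F_1(n,o)`: degree-1 probability at the corner vertex of `SG(n)`. -/
def F1 (n : ℕ) : ℚ := 11 / 14 - (5 / 42) * (1 / 15) ^ n

/-- `F_2(n,o)`: degree-2 probability at the corner vertex of `SG(n)`. -/
def F2 (n : ℕ) : ℚ := 3 / 14 + (5 / 42) * (1 / 15) ^ n

/-- `G_1(n,o)`. -/
def G1 (n : ℕ) : ℚ := 11 / 14 + (3 / 14) * (1 / 15) ^ n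

/-- `G_2(n,o)`. -/
def G2 (n : ℕ) : ℚ := 3 / 14 - (3 / 14) * (1 / 15) ^ n

/-- `G_0(n,b_n)`. -/
def G0b (n : ℕ) : ℚ := (33 / 28) * (3 / 5) ^ n - (5 / 28) * (1 / 25) ^ n

/-- `H_0(n,o)`. -/
def H0 (n : ℕ) : ℚ := (11 / 14) * (3 / 5) ^ n + (3 / 14) * (1 / 25) ^ n

/-- `G_1(n,b_n)`. -/
def G1b (n : ℕ) : ℚ :=
  11 / 14 - (2 / 7) * (1 / 15) ^ n - (6 / 7) * (3 / 5) ^ n + (5 / 14) * (1 / 25) ^ n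

/-- `G_2(n,b_n)`. -/
def G2b (n : ℕ) : ℚ :=
  3 / 14 + (2 / 7) * (1 / 15) ^ n - (9 / 28) * (3 / 5) ^ n - (5 / 28) * (1 / 25) ^ n

/-- `H_1(n,o)`. -/
def H1 (n : ℕ) : ℚ :=
  11 / 14 + (3 / 14) * (1 / 15) ^ n - (4 / 7) * (3 / 5) ^ n - (3 / 7) * (1 / 25) ^ n

/-- `H_2(n,o)`. -/
def H2 (n : ℕ) : ℚ :=
  3 / 14 - (3 / 14) * (1 / 15) ^ n - (3 / 14) * (3 / 5) ^ n + (3 / 14) * (1 / 25) ^ n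

/-- Closed form of `F_1(n+m+1,a_n)`: degree-1 probability at the interior vertex
`a_n` of the Sierpinski gasket `SG(n+m+1)`. -/
theorem stmt_11 (n : ℕ) (F Ga Gb : ℕ → ℚ)
    (hF0 : F 0 = F1 n * G0b n / 3)
    (hGa0 : Ga 0 = F1 n * G0b n / 5)
    (hGb0 : Gb 0 = (3 / 10) * F1 n * H0 n + (1 / 5) * (F1 n + G1 n) * G0b n)
    (hF : ∀ m, F (m + 1) = (2 / 3) * F m + (1 / 6) * (Ga m + Gb m))
    (hGa : ∀ m, Ga (m + 1) = (3 / 5) * F m + (3 / 10) * Ga m + (1 / 10) * Gb m)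
    (hGb : ∀ m, Gb (m + 1) = (3 / 5) * F m + (1 / 10) * Ga m + (3 / 10) * Gb m) :
    ∀ m : ℕ,
      F m = (1815 / 5488) * (3 / 5) ^ n - (99 / 1372) * (1 / 25) ^ n
        + (55 / 16464) * (1 / 375) ^ n
        + (1 / 15) ^ m * (-(121 / 5488) * (3 / 5) ^ n - (22 / 1029) * (1 / 25) ^ n
            + (185 / 49392) * (1 / 375) ^ n) := by
  have h25 : (1 / 25 : ℚ) ^ n = (1 / 15) ^ n * (3 / 5) ^ n := by
    rw [← mul_pow]; norm_num
  have h375 : (1 / 375 : ℚ) ^ n = (1 / 15) ^ n * ((1 / 15) ^ n * (3 / 5) ^ n) := by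
    rw [← mul_pow, ← mul_pow]; norm_num
  set A : ℚ := (1815 / 5488) * (3 / 5) ^ n - (99 / 1372) * (1 / 25) ^ n
      + (55 / 16464) * (1 / 375) ^ n with hA
  set C : ℚ := -(121 / 5488) * (3 / 5) ^ n - (22 / 1029) * (1 / 25) ^ n
      + (185 / 49392) * (1 / 375) ^ n with hC
  have key : ∀ m : ℕ, F m = A + (1 / 15) ^ m * C ∧
      Ga m + Gb m = 2 * A - (18 / 5) * ((1 / 15) ^ m * C) := by
    intro m
    induction m with
    | zero =>
      constructor <;>
        · simp only [hF0, hGa0, hGb0, hA, hC, F1, G0b, H0, G1, h25, h375, pow_zero]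
          ring
    | succ k ih =>
      obtain ⟨ih1, ih2⟩ := ih
      constructor
      · rw [hF k, ih1, ih2, pow_succ]; ring
      · rw [hGa k, hGb k, ih1]
        have : Ga k + Gb k = 2 * A - (18 / 5) * ((1 / 15) ^ k * C) := ih2
        have hGak : (3/10 : ℚ) * Ga k + (1/10) * Gb k + ((1/10) * Ga k + (3/10) * Gb k)
            = (2/5) * (Ga k + Gb k) := by ring
        rw [show (3/5 : ℚ) * (A + (1/15)^k * C) + (3/10) * Ga k + (1/10) * Gb k
            + ((3/5) * (A + (1/15)^k * C) + (1/10) * Ga k + (3/10) * Gb k)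
            = (6/5) * (A + (1/15)^k * C) + (2/5) * (Ga k + Gb k) by ring, ih2, pow_succ]
        ring
  intro m
  exact (key m).1
end

section
/- Define F1(n)=11/14−(5/42)·(1/15)^n, F2(n)=3/14+(5/42)·(1/15)^n, G1(n)=11/14+(3/14)·(1/15)^n, G2(n)=3/14−(3/14)·(1/15)^n, G0b(n)=(33/28)·(3/5)^n−(5/28)·(1/25)^n, H0(n)=(11/14)·(3/5)^n+(3/14)·(1/25)^n, G1b(n)=11/14−(2/7)·(1/15)^n−(6/7)·(3/5)^n+(5/14)·(1/25)^n, H1(n)=11/14+(3/14)·(1/15)^n−(4/7)·(3/5)^n−(3/7)·(1/25)^n. Fix n ≥ 0 and let F, Ga, Gb : ℕ → ℚ satisfy F(0)=(1/3)·(F2(n)·G0b(n)+F1(n)²+F1(n)·(G1(n)+G1b(n))), Ga(0)=(3/10)·F1(n)²+(1/5)·F1(n)·(2·G1(n)+G1b(n))+(1/5)·F2(n)·G0b(n)+(1/10)·G1(n)², Gb(0)=(3/10)·(F2(n)·H0(n)+F1(n)·H1(n))+(1/10)·G1(n)²+(1/5)·F1(n)·(G1(n)+G1b(n))+(1/5)·F2(n)·G0b(n)+(1/5)·(G0b(n)·G2(n)+G1(n)·G1b(n)),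 together with the recursions F(m+1)=(2/3)F(m)+(1/6)(Ga(m)+Gb(m)), Ga(m+1)=(3/5)F(m)+(3/10)Ga(m)+(1/10)Gb(m), Gb(m+1)=(3/5)F(m)+(1/10)Ga(m)+(3/10)Gb(m). Then for all m ≥ 0: F(m) = 121/196 − (825/5488)·(3/5)^n + (171/1372)·(1/25)^n − (55/5488)·(1/375)^n − (121/1176)·(1/15)^n + (1/294)·(1/225)^n + (1/15)^m·( (55/5488)·(3/5)^n + (38/1029)·(1/25)^n − (185/16464)·(1/375)^n − (143/3528)·(1/15)^n + (11/2646)·(1/225)^n ). -/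
/-- Closed form of `F_2(n+m+1,a_n)`: degree-2 probability at the interior vertex
`a_n` of the Sierpinski gasket `SG(n+m+1)`. -/
theorem stmt_12 (n : ℕ) (F Ga Gb : ℕ → ℚ)
    (hF0 : F 0 = (1 / 3) * (F2 n * G0b n + (F1 n) ^ 2 + F1 n * (G1 n + G1b n)))
    (hGa0 : Ga 0 = (3 / 10) * (F1 n) ^ 2 + (1 / 5) * F1 n * (2 * G1 n + G1b n)
      + (1 / 5) * F2 n * G0b n + (1 / 10) * (G1 n) ^ 2)
    (hGb0 : Gb 0 = (3 / 10) * (F2 n * H0 n + F1 n * H1 n) + (1 / 10) * (G1 n) ^ 2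
      + (1 / 5) * F1 n * (G1 n + G1b n) + (1 / 5) * F2 n * G0b n
      + (1 / 5) * (G0b n * G2 n + G1 n * G1b n))
    (hF : ∀ m, F (m + 1) = (2 / 3) * F m + (1 / 6) * (Ga m + Gb m))
    (hGa : ∀ m, Ga (m + 1) = (3 / 5) * F m + (3 / 10) * Ga m + (1 / 10) * Gb m)
    (hGb : ∀ m, Gb (m + 1) = (3 / 5) * F m + (1 / 10) * Ga m + (3 / 10) * Gb m) :
    ∀ m : ℕ,
      F m = 121 / 196 - (825 / 5488) * (3 / 5) ^ n + (171 / 1372) * (1 / 25) ^ n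
        - (55 / 5488) * (1 / 375) ^ n - (121 / 1176) * (1 / 15) ^ n
        + (1 / 294) * (1 / 225) ^ n
        + (1 / 15) ^ m * ((55 / 5488) * (3 / 5) ^ n + (38 / 1029) * (1 / 25) ^ n
            - (185 / 16464) * (1 / 375) ^ n - (143 / 3528) * (1 / 15) ^ n
            + (11 / 2646) * (1 / 225) ^ n) := by
  have h25 : ((1:ℚ)/25)^n = (1/15)^n * (3/5)^n := by rw [← mul_pow]; norm_num
  have h225 : ((1:ℚ)/225)^n = (1/15)^n * (1/15)^n := by rw [← mul_pow]; norm_num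
  have h375 : ((1:ℚ)/375)^n = (1/15)^n * ((1/15)^n * (3/5)^n) := by
    rw [← h25, ← mul_pow]; norm_num
  set x : ℚ := (1/15)^n with hx
  set y : ℚ := (3/5)^n with hy
  set A : ℚ := 121/196 - (825/5488)*y + (171/1372)*(x*y) - (55/5488)*(x*(x*y))
      - (121/1176)*x + (1/294)*(x*x) with hA
  set B : ℚ := (55/5488)*y + (38/1029)*(x*y) - (185/16464)*(x*(x*y))
      - (143/3528)*x + (11/2646)*(x*x) with hB
  have key : ∀ m : ℕ, F m = A + (1/15)^m * B ∧
      Ga m + Gb m = 2*A - (18/5) * ((1/15)^m * B) := by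
    intro m
    induction m with
    | zero =>
      constructor
      · rw [hF0]
        simp only [F1, F2, G1, G1b, G0b, h25, h375, h225, ← hx, ← hy, hA, hB]
        ring
      · rw [hGa0, hGb0]
        simp only [F1, F2, G1, G2, G1b, G0b, H0, H1, h25, h375, h225, ← hx, ← hy, hA, hB]
        ring
    | succ m ih =>
      constructor
      · rw [hF m, ih.1, ih.2]; ring
      · rw [hGa m, hGb m]
        have h1 := ih.1
        have h2 := ih.2
        linear_combination (6/5) * h1 + (2/5) * h2
  intro m
  have := (key m).1
  rw [this, h25, h375, h225, hA, hB]
end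

section
/- Define F1(n)=11/14−(5/42)·(1/15)^n, F2(n)=3/14+(5/42)·(1/15)^n, G1(n)=11/14+(3/14)·(1/15)^n, G2(n)=3/14−(3/14)·(1/15)^n, G1b(n)=11/14−(2/7)·(1/15)^n−(6/7)·(3/5)^n+(5/14)·(1/25)^n, G2b(n)=3/14+(2/7)·(1/15)^n−(9/28)·(3/5)^n−(5/28)·(1/25)^n, H1(n)=11/14+(3/14)·(1/15)^n−(4/7)·(3/5)^n−(3/7)·(1/25)^n, H2(n)=3/14−(3/14)·(1/15)^n−(3/14)·(3/5)^n+(3/14)·(1/25)^n. Fix n ≥ 0 and let F, Ga, Gb : ℕ → ℚ satisfy F(0)=(1/3)·(F2(n)·(G1(n)+G1b(n))+2·F1(n)·F2(n)+F1(n)·(G2(n)+G2b(n))), Ga(0)=(3/5)·F1(n)·F2(n)+(1/5)·F2(n)·(2·G1(n)+G1b(n))+(1/5)·G1(n)·G2(n)+(1/5)·F1(n)·(2·G2(n)+G2b(n)), Gb(0)=(3/10)·(F2(n)·H1(n)+F1(n)·H2(n))+(1/5)·((G1b(n)+G1(n))·G2(n)+G1(n)·G2b(n))+(1/5)·(F1(n)·(G2(n)+G2b(n))+F2(n)·(G1(n)+G1b(n))),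 together with the recursions F(m+1)=(2/3)F(m)+(1/6)(Ga(m)+Gb(m)), Ga(m+1)=(3/5)F(m)+(3/10)Ga(m)+(1/10)Gb(m), Gb(m+1)=(3/5)F(m)+(1/10)Ga(m)+(3/10)Gb(m). Then for all m ≥ 0: F(m) = 33/98 − (855/5488)·(3/5)^n − (45/1372)·(1/25)^n + (55/5488)·(1/375)^n + (11/147)·(1/15)^n − (1/147)·(1/225)^n + (1/15)^m·( (57/5488)·(3/5)^n − (10/1029)·(1/25)^n + (185/16464)·(1/375)^n + (13/441)·(1/15)^n − (11/1323)·(1/225)^n ). -/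
/-- Closed form of `F_3(n+m+1,a_n)`: degree-3 probability at the interior vertex
`a_n` of the Sierpinski gasket `SG(n+m+1)`. -/
theorem stmt_13 (n : ℕ) (F Ga Gb : ℕ → ℚ)
    (hF0 : F 0 = (1 / 3) * (F2 n * (G1 n + G1b n) + 2 * F1 n * F2 n
      + F1 n * (G2 n + G2b n)))
    (hGa0 : Ga 0 = (3 / 5) * F1 n * F2 n + (1 / 5) * F2 n * (2 * G1 n + G1b n)
      + (1 / 5) * G1 n * G2 n + (1 / 5) * F1 n * (2 * G2 n + G2b n))
    (hGb0 : Gb 0 = (3 / 10) * (F2 n * H1 n + F1 n * H2 n)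
      + (1 / 5) * ((G1b n + G1 n) * G2 n + G1 n * G2b n)
      + (1 / 5) * (F1 n * (G2 n + G2b n) + F2 n * (G1 n + G1b n)))
    (hF : ∀ m, F (m + 1) = (2 / 3) * F m + (1 / 6) * (Ga m + Gb m))
    (hGa : ∀ m, Ga (m + 1) = (3 / 5) * F m + (3 / 10) * Ga m + (1 / 10) * Gb m)
    (hGb : ∀ m, Gb (m + 1) = (3 / 5) * F m + (1 / 10) * Ga m + (3 / 10) * Gb m) :
    ∀ m : ℕ,
      F m = 33 / 98 - (855 / 5488) * (3 / 5) ^ n - (45 / 1372) * (1 / 25) ^ n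
        + (55 / 5488) * (1 / 375) ^ n + (11 / 147) * (1 / 15) ^ n
        - (1 / 147) * (1 / 225) ^ n
        + (1 / 15) ^ m * ((57 / 5488) * (3 / 5) ^ n - (10 / 1029) * (1 / 25) ^ n
            + (185 / 16464) * (1 / 375) ^ n + (13 / 441) * (1 / 15) ^ n
            - (11 / 1323) * (1 / 225) ^ n) := by
  have h25 : ((1 / 25 : ℚ)) ^ n = (1 / 15) ^ n * (3 / 5) ^ n := by
    rw [← mul_pow]; norm_num
  have h375 : ((1 / 375 : ℚ)) ^ n = (1 / 15) ^ n * ((1 / 15) ^ n * (3 / 5) ^ n) := by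
    rw [← mul_pow, ← mul_pow]; norm_num
  have h225 : ((1 / 225 : ℚ)) ^ n = (1 / 15) ^ n * (1 / 15) ^ n := by
    rw [← mul_pow]; norm_num
  set x : ℚ := (1 / 15) ^ n with hx
  set y : ℚ := (3 / 5) ^ n with hy
  set A : ℚ := 33 / 98 - 855 / 5488 * y - 45 / 1372 * (x * y) + 55 / 5488 * (x * x * y)
    + 11 / 147 * x - 1 / 147 * (x * x) with hA
  set B : ℚ := 57 / 5488 * y - 10 / 1029 * (x * y) + 185 / 16464 * (x * x * y)
    + 13 / 441 * x - 11 / 1323 * (x * x) with hB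
  set E : ℚ := -(513 / 27440) * y + 6 / 343 * (x * y) - 111 / 5488 * (x * x * y)
    - 13 / 245 * x + 11 / 735 * (x * x) with hE
  set D : ℚ := 2 / 105 * x - 2 / 105 * (x * x) + 171 / 1960 * y - 1 / 98 * (x * y)
    + 9 / 392 * (x * x * y) with hD
  have key : ∀ m, F m = A + (1 / 15) ^ m * B ∧
      Ga m = A + (1 / 15) ^ m * E + (1 / 5) ^ m * D ∧
      Gb m = A + (1 / 15) ^ m * E - (1 / 5) ^ m * D := by
    intro m
    induction m with
    | zero =>
      simp only [F1, F2, G1, G2, G1b, G2b, H1, H2, ← hx, ← hy, h25] at hF0 hGa0 hGb0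
      refine ⟨?_, ?_, ?_⟩
      · rw [hF0]; rw [hA, hB]; ring
      · rw [hGa0]; rw [hA, hE, hD]; ring
      · rw [hGb0]; rw [hA, hE, hD]; ring
    | succ m ih =>
      obtain ⟨ih1, ih2, ih3⟩ := ih
      refine ⟨?_, ?_, ?_⟩
      · rw [hF m, ih1, ih2, ih3]; ring
      · rw [hGa m, ih1, ih2, ih3]; ring
      · rw [hGb m, ih1, ih2, ih3]; ring
  intro m
  rw [(key m).1, h25, h375, h225, hA, hB]
  ring
end

section
/- Define F2(n)=3/14+(5/42)·(1/15)^n, G2(n)=3/14−(3/14)·(1/15)^n, G2b(n)=3/14+(2/7)·(1/15)^n−(9/28)·(3/5)^n−(5/28)·(1/25)^n, H2(n)=3/14−(3/14)·(1/15)^n−(3/14)·(3/5)^n+(3/14)·(1/25)^n. Fix n ≥ 0 and let F, Ga, Gb : ℕ → ℚ satisfy F(0)=(1/3)·(F2(n)·(G2(n)+G2b(n))+F2(n)²), Ga(0)=(3/10)·F2(n)²+(1/5)·F2(n)·(2·G2(n)+G2b(n))+(1/10)·G2(n)², Gb(0)=(3/10)·F2(n)·H2(n)+(1/5)·(F2(n)·(G2(n)+G2b(n))+G2(n)·G2b(n))+(1/10)·G2(n)²,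 together with the recursions F(m+1)=(2/3)F(m)+(1/6)(Ga(m)+Gb(m)), Ga(m+1)=(3/5)F(m)+(3/10)Ga(m)+(1/10)Gb(m), Gb(m+1)=(3/5)F(m)+(1/10)Ga(m)+(3/10)Gb(m). Then for all m ≥ 0: F(m) = 9/196 − (135/5488)·(3/5)^n − (27/1372)·(1/25)^n − (55/16464)·(1/375)^n + (11/392)·(1/15)^n + (1/294)·(1/225)^n + (1/15)^m·( (9/5488)·(3/5)^n − (2/343)·(1/25)^n − (185/49392)·(1/375)^n + (13/1176)·(1/15)^n + (11/2646)·(1/225)^n ). -/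
/-- Closed form of `F_4(n+m+1,a_n)`: degree-4 probability at the interior vertex
`a_n` of the Sierpinski gasket `SG(n+m+1)`. -/
theorem stmt_14 (n : ℕ) (F Ga Gb : ℕ → ℚ)
    (hF0 : F 0 = (1 / 3) * (F2 n * (G2 n + G2b n) + (F2 n) ^ 2))
    (hGa0 : Ga 0 = (3 / 10) * (F2 n) ^ 2 + (1 / 5) * F2 n * (2 * G2 n + G2b n)
      + (1 / 10) * (G2 n) ^ 2)
    (hGb0 : Gb 0 = (3 / 10) * F2 n * H2 n
      + (1 / 5) * (F2 n * (G2 n + G2b n) + G2 n * G2b n) + (1 / 10) * (G2 n) ^ 2)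
    (hF : ∀ m, F (m + 1) = (2 / 3) * F m + (1 / 6) * (Ga m + Gb m))
    (hGa : ∀ m, Ga (m + 1) = (3 / 5) * F m + (3 / 10) * Ga m + (1 / 10) * Gb m)
    (hGb : ∀ m, Gb (m + 1) = (3 / 5) * F m + (1 / 10) * Ga m + (3 / 10) * Gb m) :
    ∀ m : ℕ,
      F m = 9 / 196 - (135 / 5488) * (3 / 5) ^ n - (27 / 1372) * (1 / 25) ^ n
        - (55 / 16464) * (1 / 375) ^ n + (11 / 392) * (1 / 15) ^ n
        + (1 / 294) * (1 / 225) ^ n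
        + (1 / 15) ^ m * ((9 / 5488) * (3 / 5) ^ n - (2 / 343) * (1 / 25) ^ n
            - (185 / 49392) * (1 / 375) ^ n + (13 / 1176) * (1 / 15) ^ n
            + (11 / 2646) * (1 / 225) ^ n) := by

  have h1 : ((1:ℚ)/25)^n = (1/15)^n * (3/5)^n := by rw [← mul_pow]; norm_num
  have h2 : ((1:ℚ)/225)^n = (1/15)^n * (1/15)^n := by rw [← mul_pow]; norm_num
  have h3 : ((1:ℚ)/375)^n = (1/15)^n * ((1/15)^n * (3/5)^n) := by
    rw [← mul_pow, ← mul_pow]; norm_num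
  have key : ∀ m : ℕ,
      F m = 9 / 196 - (135 / 5488) * (3 / 5) ^ n - (27 / 1372) * (1 / 25) ^ n
        - (55 / 16464) * (1 / 375) ^ n + (11 / 392) * (1 / 15) ^ n
        + (1 / 294) * (1 / 225) ^ n
        + (1 / 15) ^ m * ((9 / 5488) * (3 / 5) ^ n - (2 / 343) * (1 / 25) ^ n
            - (185 / 49392) * (1 / 375) ^ n + (13 / 1176) * (1 / 15) ^ n
            + (11 / 2646) * (1 / 225) ^ n) ∧
      Ga m + Gb m = 2 * (9 / 196 - (135 / 5488) * (3 / 5) ^ n - (27 / 1372) * (1 / 25) ^ n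
        - (55 / 16464) * (1 / 375) ^ n + (11 / 392) * (1 / 15) ^ n
        + (1 / 294) * (1 / 225) ^ n)
        - (18 / 5) * (1 / 15) ^ m * ((9 / 5488) * (3 / 5) ^ n - (2 / 343) * (1 / 25) ^ n
            - (185 / 49392) * (1 / 375) ^ n + (13 / 1176) * (1 / 15) ^ n
            + (11 / 2646) * (1 / 225) ^ n) := by
    intro m
    induction m with
    | zero =>
      constructor
      · rw [hF0]; unfold F2 G2 G2b
        rw [h1, h2, h3]; ring
      · rw [hGa0, hGb0]; unfold F2 G2 G2b H2
        rw [h1, h2, h3]; ring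
    | succ m ih =>
      obtain ⟨ihF, ihS⟩ := ih
      constructor
      · rw [hF m, pow_succ]
        linear_combination (2/3) * ihF + (1/6) * ihS
      · rw [hGa m, hGb m, pow_succ]
        linear_combination (6/5) * ihF + (2/5) * ihS
  exact fun m => (key m).1
end

section
/- Define F1(n)=11/14−(5/42)·(1/15)^n, G1(n)=11/14+(3/14)·(1/15)^n, G0b(n)=(33/28)·(3/5)^n−(5/28)·(1/25)^n, H0(n)=(11/14)·(3/5)^n+(3/14)·(1/25)^n. Fix n ≥ 0 and let F, G : ℕ → ℚ satisfy F(0)=F1(n)·G0b(n)/3, G(0)=(3/10)·F1(n)·H0(n)+(1/5)·(F1(n)+G1(n))·G0b(n), together with the recursions F(m+1)=(2/3)·F(m)+(1/3)·G(m), G(m+1)=(3/5)·F(m)+(2/5)·G(m). Then for all m ≥ 0: F(m) = (1089/2744)·(3/5)^n − (22/343)·(1/25)^n + (5/8232)·(1/375)^n + (1/15)^m·( −(121/1372)·(3/5)^n − (121/4116)·(1/25)^n + (20/3087)·(1/375)^n ). -/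
/-- Closed form of `F_1(n+m+1,c_n)`: degree-1 probability at the interior vertex
`c_n` of the Sierpinski gasket `SG(n+m+1)`. -/
theorem stmt_15 (n : ℕ) (F G : ℕ → ℚ)
    (hF0 : F 0 = F1 n * G0b n / 3)
    (hG0 : G 0 = (3 / 10) * F1 n * H0 n + (1 / 5) * (F1 n + G1 n) * G0b n)
    (hF : ∀ m, F (m + 1) = (2 / 3) * F m + (1 / 3) * G m)
    (hG : ∀ m, G (m + 1) = (3 / 5) * F m + (2 / 5) * G m) :
    ∀ m : ℕ,
      F m = (1089 / 2744) * (3 / 5) ^ n - (22 / 343) * (1 / 25) ^ n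
        + (5 / 8232) * (1 / 375) ^ n
        + (1 / 15) ^ m * (-(121 / 1372) * (3 / 5) ^ n - (121 / 4116) * (1 / 25) ^ n
            + (20 / 3087) * (1 / 375) ^ n) := by

  have hc : ((1:ℚ)/25)^n = (1/15)^n * (3/5)^n := by
    rw [← mul_pow]; norm_num
  have hd : ((1:ℚ)/375)^n = (1/15)^n * (1/15)^n * (3/5)^n := by
    rw [← mul_pow, ← mul_pow]; norm_num
  have key : ∀ m : ℕ,
      F m = (1089 / 2744) * (3 / 5) ^ n - (22 / 343) * (1 / 25) ^ n
        + (5 / 8232) * (1 / 375) ^ n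
        + (1 / 15) ^ m * (-(121 / 1372) * (3 / 5) ^ n - (121 / 4116) * (1 / 25) ^ n
            + (20 / 3087) * (1 / 375) ^ n) ∧
      G m = (1089 / 2744) * (3 / 5) ^ n - (22 / 343) * (1 / 25) ^ n
        + (5 / 8232) * (1 / 375) ^ n
        + (1 / 15) ^ m * ((-(9:ℚ)/5) * (-(121 / 1372) * (3 / 5) ^ n
            - (121 / 4116) * (1 / 25) ^ n + (20 / 3087) * (1 / 375) ^ n)) := by
    intro m
    induction m with
    | zero =>
      constructor
      · rw [hF0]; simp only [F1, G0b, hc, hd, pow_zero]; ring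
      · rw [hG0]; simp only [F1, G1, G0b, H0, hc, hd, pow_zero]; ring
    | succ k ih =>
      obtain ⟨ihF, ihG⟩ := ih
      constructor
      · rw [hF k, ihF, ihG]; ring
      · rw [hG k, ihF, ihG]; ring
  exact fun m => (key m).1
end

section
/- Define F1(n)=11/14−(5/42)·(1/15)^n, F2(n)=3/14+(5/42)·(1/15)^n, G1(n)=11/14+(3/14)·(1/15)^n, G2(n)=3/14−(3/14)·(1/15)^n, G0b(n)=(33/28)·(3/5)^n−(5/28)·(1/25)^n, H0(n)=(11/14)·(3/5)^n+(3/14)·(1/25)^n, G1b(n)=11/14−(2/7)·(1/15)^n−(6/7)·(3/5)^n+(5/14)·(1/25)^n, H1(n)=11/14+(3/14)·(1/15)^n−(4/7)·(3/5)^n−(3/7)·(1/25)^n. Fix n ≥ 0 and let F, G : ℕ → ℚ satisfy F(0)=(1/3)·(F2(n)·G0b(n)+F1(n)²+F1(n)·(G1(n)+G1b(n))), G(0)=(3/10)·(F2(n)·H0(n)+F1(n)·H1(n))+(1/10)·G1(n)²+(1/5)·F1(n)·(G1(n)+G1b(n))+(1/5)·F2(n)·G0b(n)+(1/5)·(G0b(n)·G2(n)+G1(n)·G1b(n)),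 together with the recursions F(m+1)=(2/3)·F(m)+(1/3)·G(m), G(m+1)=(3/5)·F(m)+(2/5)·G(m). Then for all m ≥ 0: F(m) = 121/196 − (495/2744)·(3/5)^n + (38/343)·(1/25)^n − (5/2744)·(1/375)^n − (55/588)·(1/15)^n + (1/15)^m·( (55/1372)·(3/5)^n + (209/4116)·(1/25)^n − (20/1029)·(1/375)^n − (22/441)·(1/15)^n + (10/1323)·(1/225)^n ). -/
/-- Closed form of `F_2(n+m+1,c_n)`: degree-2 probability at the interior vertex
`c_n` of the Sierpinski gasket `SG(n+m+1)`. -/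
theorem stmt_16 (n : ℕ) (F G : ℕ → ℚ)
    (hF0 : F 0 = (1 / 3) * (F2 n * G0b n + (F1 n) ^ 2 + F1 n * (G1 n + G1b n)))
    (hG0 : G 0 = (3 / 10) * (F2 n * H0 n + F1 n * H1 n) + (1 / 10) * (G1 n) ^ 2
      + (1 / 5) * F1 n * (G1 n + G1b n) + (1 / 5) * F2 n * G0b n
      + (1 / 5) * (G0b n * G2 n + G1 n * G1b n))
    (hF : ∀ m, F (m + 1) = (2 / 3) * F m + (1 / 3) * G m)
    (hG : ∀ m, G (m + 1) = (3 / 5) * F m + (2 / 5) * G m) :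
    ∀ m : ℕ,
      F m = 121 / 196 - (495 / 2744) * (3 / 5) ^ n + (38 / 343) * (1 / 25) ^ n
        - (5 / 2744) * (1 / 375) ^ n - (55 / 588) * (1 / 15) ^ n
        + (1 / 15) ^ m * ((55 / 1372) * (3 / 5) ^ n + (209 / 4116) * (1 / 25) ^ n
            - (20 / 1029) * (1 / 375) ^ n - (22 / 441) * (1 / 15) ^ n
            + (10 / 1323) * (1 / 225) ^ n) := by
  have hx : ((1:ℚ)/25) ^ n = (1/15) ^ n * (3/5) ^ n := by rw [← mul_pow]; norm_num
  have hy : ((1:ℚ)/375) ^ n = (1/15) ^ n * (1/25) ^ n := by rw [← mul_pow]; norm_num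
  have hz : ((1:ℚ)/225) ^ n = (1/15) ^ n * (1/15) ^ n := by rw [← mul_pow]; norm_num
  have key : ∀ m : ℕ,
      F m = 121 / 196 - (495 / 2744) * (3 / 5) ^ n + (38 / 343) * (1 / 25) ^ n
        - (5 / 2744) * (1 / 375) ^ n - (55 / 588) * (1 / 15) ^ n
        + (1 / 15) ^ m * ((55 / 1372) * (3 / 5) ^ n + (209 / 4116) * (1 / 25) ^ n
            - (20 / 1029) * (1 / 375) ^ n - (22 / 441) * (1 / 15) ^ n
            + (10 / 1323) * (1 / 225) ^ n) ∧
      G m = 121 / 196 - (495 / 2744) * (3 / 5) ^ n + (38 / 343) * (1 / 25) ^ n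
        - (5 / 2744) * (1 / 375) ^ n - (55 / 588) * (1 / 15) ^ n
        - (9 / 5) * (1 / 15) ^ m * ((55 / 1372) * (3 / 5) ^ n + (209 / 4116) * (1 / 25) ^ n
            - (20 / 1029) * (1 / 375) ^ n - (22 / 441) * (1 / 15) ^ n
            + (10 / 1323) * (1 / 225) ^ n) := by
    intro m
    induction m with
    | zero =>
      constructor
      · rw [hF0]
        simp only [F1, F2, G1, G2, G0b, H0, G1b, H1, hx, hy, hz, pow_zero]
        ring
      · rw [hG0]
        simp only [F1, F2, G1, G2, G0b, H0, G1b, H1, hx, hy, hz, pow_zero]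
        ring
    | succ k ih =>
      obtain ⟨ihF, ihG⟩ := ih
      constructor
      · rw [hF k, ihF, ihG, pow_succ]; ring
      · rw [hG k, ihF, ihG, pow_succ]; ring
  exact fun m => (key m).1
end

section
/- Let R and E be the 5×5 rational matrices R = [[2/3,3/5,1/10,3/5,6/25],[1/6,3/10,1/10,1/10,7/50],[0,0,2/5,0,6/25],[1/6,1/10,1/10,3/10,7/50],[0,0,3/10,0,6/25]] and E = [[3,0,0,0,0],[0,2,1,0,0],[0,1,1,1,0],[0,0,1,2,0],[0,0,0,0,3]]. Let B : ℕ → Matrix (Fin 3) (Fin 5) ℚ be an arbitrary sequence of 3×5 rational matrices, and define M : ℕ → Matrix (Fin 3) (Fin 5) ℚ by M(3) = B(1)·R·E·R and M(n+1) = (B(n−1)·R + M(n))·E·R for all n ≥ 3. Then for every n ≥ 2, M(n+1) = Σ_{m=1}^{n−1} B(m)·R·(E·R)^{n−m}. Moreover, with L the 5×5 rational matrix [[2/3,3/5,3/5,3/5,6/25],[1/6,3/10,1/10,0,7/50],[1/6,1/10,3/10,1/10,7/50],[0,0,0,3/10,6/25],[0,0,0,0,6/25]], for every n ≥ 3 one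 has Σ_{m=3}^{n} M(m)·L^{n−m} = Σ_{s=1}^{n−2} B(s)·( Σ_{m=1}^{n−s−1} R·(E·R)^m·L^{n−1−m−s} ). -/
open Finset in
/-- Matrix identity for the sums `M_j(n)` of degree-probability matrices over all
vertex labels of length at least 3 in the Sierpinski gasket, in terms of the
transfer matrices `R`, `E` and `L`. -/
theorem stmt_18
    (R E L : Matrix (Fin 5) (Fin 5) ℚ)
    (hR : R = !![2/3, 3/5, 1/10, 3/5, 6/25;
                 1/6, 3/10, 1/10, 1/10, 7/50;
                 0, 0, 2/5, 0, 6/25;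
                 1/6, 1/10, 1/10, 3/10, 7/50;
                 0, 0, 3/10, 0, 6/25])
    (hE : E = !![3, 0, 0, 0, 0;
                 0, 2, 1, 0, 0;
                 0, 1, 1, 1, 0;
                 0, 0, 1, 2, 0;
                 0, 0, 0, 0, 3])
    (hL : L = !![2/3, 3/5, 3/5, 3/5, 6/25;
                 1/6, 3/10, 1/10, 0, 7/50;
                 1/6, 1/10, 3/10, 1/10, 7/50;
                 0, 0, 0, 3/10, 6/25;
                 0, 0, 0, 0, 6/25])
    (B M : ℕ → Matrix (Fin 3) (Fin 5) ℚ)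
    (hM3 : M 3 = B 1 * R * E * R)
    (hMrec : ∀ n, 3 ≤ n → M (n + 1) = (B (n - 1) * R + M n) * E * R) :
    (∀ n, 2 ≤ n →
      M (n + 1) = ∑ m ∈ Finset.Icc 1 (n - 1), B m * R * (E * R) ^ (n - m)) ∧
    (∀ n, 3 ≤ n →
      ∑ m ∈ Finset.Icc 3 n, M m * L ^ (n - m) =
        ∑ s ∈ Finset.Icc 1 (n - 2), B s *
          (∑ m ∈ Finset.Icc 1 (n - s - 1), R * (E * R) ^ m * L ^ (n - 1 - m - s))) := by
  clear hR hE hL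
  have P1 : ∀ k : ℕ, M (k + 3) = ∑ m ∈ Finset.Icc 1 (k + 1), B m * R * (E * R) ^ (k + 2 - m) := by
    intro k
    induction k with
    | zero => simp [hM3, Matrix.mul_assoc]
    | succ k ih =>
      have h := hMrec (k + 3) (by omega)
      rw [show k + 3 - 1 = k + 2 from rfl] at h
      rw [show k + 1 + 3 = k + 3 + 1 from rfl, h, ih,
        Finset.sum_Icc_succ_top (by omega : (1:ℕ) ≤ k + 2),
        Matrix.add_mul, Matrix.add_mul, Matrix.sum_mul, Matrix.sum_mul, add_comm]
      congr 1
      · refine Finset.sum_congr rfl fun m hm => ?_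
        simp only [Finset.mem_Icc] at hm
        rw [Matrix.mul_assoc (B m * R * (E * R) ^ (k + 2 - m)) E R,
          Matrix.mul_assoc (B m * R), ← pow_succ]
        congr 2
        omega
      · rw [show k + 1 + 2 - (k + 2) = 1 by omega, pow_one, Matrix.mul_assoc, Matrix.mul_assoc]
  have P2 : ∀ k : ℕ, ∑ m ∈ Finset.Icc 3 (k + 3), M m * L ^ (k + 3 - m) =
      ∑ s ∈ Finset.Icc 1 (k + 1), B s *
        (∑ m ∈ Finset.Icc 1 (k + 2 - s), R * (E * R) ^ m * L ^ (k + 2 - m - s)) := by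
    intro k
    induction k with
    | zero => simp [hM3, Matrix.mul_assoc]
    | succ k ih =>
      rw [show k + 1 + 3 = (k + 3) + 1 from rfl,
        Finset.sum_Icc_succ_top (by omega : (3:ℕ) ≤ k + 3 + 1),
        show k + 3 + 1 - (k + 3 + 1) = 0 by omega, pow_zero, Matrix.mul_one]
      have hA : ∑ m ∈ Finset.Icc 3 (k + 3), M m * L ^ (k + 3 + 1 - m) =
          (∑ s ∈ Finset.Icc 1 (k + 1), B s *
            ∑ m ∈ Finset.Icc 1 (k + 2 - s), R * (E * R) ^ m * L ^ (k + 2 - m - s)) * L := by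
        rw [← ih, Matrix.sum_mul]
        refine Finset.sum_congr rfl fun m hm => ?_
        simp only [Finset.mem_Icc] at hm
        rw [show k + 3 + 1 - m = (k + 3 - m) + 1 by omega, pow_succ, ← Matrix.mul_assoc]
      rw [hA, P1 (k + 1)]
      have hB : ∀ s ∈ Finset.Icc 1 (k + 1),
          B s * ∑ m ∈ Finset.Icc 1 (k + 1 + 2 - s), R * (E * R) ^ m * L ^ (k + 1 + 2 - m - s) =
          B s * (∑ m ∈ Finset.Icc 1 (k + 2 - s), R * (E * R) ^ m * L ^ (k + 2 - m - s)) * L +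
            B s * (R * (E * R) ^ (k + 1 + 2 - s)) := by
        intro s hs
        simp only [Finset.mem_Icc] at hs
        rw [show k + 1 + 2 - s = (k + 2 - s) + 1 by omega,
          Finset.sum_Icc_succ_top (by omega : (1:ℕ) ≤ k + 2 - s + 1),
          show k + 1 + 2 - (k + 2 - s + 1) - s = 0 by omega, pow_zero, mul_one,
          show k + 2 - s + 1 = k + 1 + 2 - s by omega, Matrix.mul_add]
        congr 1
        rw [Matrix.mul_assoc, Finset.sum_mul]
        refine congrArg _ (Finset.sum_congr rfl fun m hm => ?_)
        simp only [Finset.mem_Icc] at hm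
        rw [show k + 1 + 2 - m - s = (k + 2 - m - s) + 1 by omega, pow_succ]
        simp only [mul_assoc]
      conv_rhs => rw [Finset.sum_Icc_succ_top (by omega : (1:ℕ) ≤ k + 1 + 1),
        Finset.sum_congr rfl hB, Finset.sum_add_distrib]
      rw [← Matrix.sum_mul,
        Finset.sum_Icc_succ_top (by omega : (1:ℕ) ≤ k + 1 + 1)]
      rw [show k + 1 + 2 - (k + 1 + 1) = 1 by omega]
      simp only [Finset.Icc_self, Finset.sum_singleton,
        show k + 1 + 2 - 1 - (k + 1 + 1) = 0 by omega, pow_zero, pow_one, mul_one]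
      have hC : ∀ s ∈ Finset.Icc 1 (k + 1),
          B s * R * (E * R) ^ (k + 1 + 2 - s) = B s * (R * (E * R) ^ (k + 1 + 2 - s)) :=
        fun s _ => Matrix.mul_assoc _ _ _
      rw [Finset.sum_congr rfl hC, Matrix.mul_assoc]
      abel
  refine ⟨fun n hn => ?_, fun n hn => ?_⟩
  · obtain ⟨k, rfl⟩ : ∃ k, n = k + 2 := ⟨n - 2, by omega⟩
    exact P1 k
  · obtain ⟨k, rfl⟩ : ∃ k, n = k + 3 := ⟨n - 3, by omega⟩
    rw [P2 k, show k + 3 - 2 = k + 1 by omega]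
    refine Finset.sum_congr rfl fun s hs => ?_
    rw [show k + 3 - s - 1 = k + 2 - s by omega]
    refine congrArg _ (Finset.sum_congr rfl fun m hm => ?_)
    rw [show k + 3 - 1 - m - s = k + 2 - m - s by omega]
end

section
/- Let R, E, L be the 5×5 rational matrices R = [[2/3,3/5,1/10,3/5,6/25],[1/6,3/10,1/10,1/10,7/50],[0,0,2/5,0,6/25],[1/6,1/10,1/10,3/10,7/50],[0,0,3/10,0,6/25]], E = [[3,0,0,0,0],[0,2,1,0,0],[0,1,1,1,0],[0,0,1,2,0],[0,0,0,0,3]], L = [[2/3,3/5,3/5,3/5,6/25],[1/6,3/10,1/10,0,7/50],[1/6,1/10,3/10,1/10,7/50],[0,0,0,3/10,6/25],[0,0,0,0,6/25]], and let Q1 = [[159,−87,0,−3,−3],[38,14,1,2,1],[38,14,0,2,−4],[38,14,−1,2,1],[15,45,0,−3,5]], Q2 = [[18,0,−27,0,−2],[5,−1,98,−1,1],[5,0,−32,1,1],[0,1,−52,0,0],[0,0,13,0,0]], D1 = diag(0,1,2/5,3/25,0), D̄1 the matrix whose (1,1) entry is 3 and all other entries 0, and D2 = diag(1,3/10,6/25,1/5,1/15).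 Then Q1 and Q2 are invertible, E·R = Q1·(D1+D̄1)·Q1⁻¹, and L = Q2·D2·Q2⁻¹. -/
set_option maxHeartbeats 4000000 in
/-- Explicit diagonalizations `E·R = Q₁(D₁+D̄₁)Q₁⁻¹` (eigenvalues 3, 1, 2/5, 3/25, 0)
and `L = Q₂D₂Q₂⁻¹` (eigenvalues 1, 3/10, 6/25, 1/5, 1/15) of the transfer matrices
appearing in the average spanning-tree degree distribution on the Sierpinski gasket. -/
theorem stmt_19
    (R E L Q1 Q2 D1 D1bar D2 : Matrix (Fin 5) (Fin 5) ℚ)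
    (hR : R = !![2/3, 3/5, 1/10, 3/5, 6/25;
                 1/6, 3/10, 1/10, 1/10, 7/50;
                 0, 0, 2/5, 0, 6/25;
                 1/6, 1/10, 1/10, 3/10, 7/50;
                 0, 0, 3/10, 0, 6/25])
    (hE : E = !![3, 0, 0, 0, 0;
                 0, 2, 1, 0, 0;
                 0, 1, 1, 1, 0;
                 0, 0, 1, 2, 0;
                 0, 0, 0, 0, 3])
    (hL : L = !![2/3, 3/5, 3/5, 3/5, 6/25;
                 1/6, 3/10, 1/10, 0, 7/50;
                 1/6, 1/10, 3/10, 1/10, 7/50;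
                 0, 0, 0, 3/10, 6/25;
                 0, 0, 0, 0, 6/25])
    (hQ1 : Q1 = !![159, -87, 0, -3, -3;
                   38, 14, 1, 2, 1;
                   38, 14, 0, 2, -4;
                   38, 14, -1, 2, 1;
                   15, 45, 0, -3, 5])
    (hQ2 : Q2 = !![18, 0, -27, 0, -2;
                   5, -1, 98, -1, 1;
                   5, 0, -32, 1, 1;
                   0, 1, -52, 0, 0;
                   0, 0, 13, 0, 0])
    (hD1 : D1 = Matrix.diagonal ![0, 1, 2/5, 3/25, 0])
    (hD1bar : D1bar = !![3, 0, 0, 0, 0;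
                         0, 0, 0, 0, 0;
                         0, 0, 0, 0, 0;
                         0, 0, 0, 0, 0;
                         0, 0, 0, 0, 0])
    (hD2 : D2 = Matrix.diagonal ![1, 3/10, 6/25, 1/5, 1/15]) :
    IsUnit Q1 ∧ IsUnit Q2 ∧
    E * R = Q1 * (D1 + D1bar) * Q1⁻¹ ∧
    L = Q2 * D2 * Q2⁻¹ := by
  subst hR hE hL hQ1 hQ2 hD1 hD1bar hD2
  set P1 : Matrix (Fin 5) (Fin 5) ℚ :=
    !![1/288, 1/288, 1/288, 1/288, 1/288;
       -1/264, -1/440, 7/440, -1/440, 1/88;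
       0, 1/2, 0, -1/2, 0;
       -125/3168, 475/3168, -245/3168, 475/3168, -461/3168;
       0, 1/10, -1/5, 1/10, 0] with hP1
  set P2 : Matrix (Fin 5) (Fin 5) ℚ :=
    !![1/28, 1/28, 1/28, 1/28, 1/28;
       0, 0, 0, 1, 4;
       0, 0, 0, 0, 1/13;
       0, -1/2, 1/2, -1/2, 3;
       -5/28, 9/28, 9/28, 9/28, -261/364] with hP2
  have hsum1 : Matrix.diagonal ![(0:ℚ), 1, 2/5, 3/25, 0] + !![3, 0, 0, 0, 0;
                         0, 0, 0, 0, 0;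
                         0, 0, 0, 0, 0;
                         0, 0, 0, 0, 0;
                         0, 0, 0, 0, 0] =
      !![3,0,0,0,0; 0,1,0,0,0; 0,0,2/5,0,0; 0,0,0,3/25,0; 0,0,0,0,0] := by
    ext i j
    fin_cases i <;> fin_cases j <;>
      simp [Matrix.diagonal_apply, Matrix.vecHead, Matrix.vecTail]
  have hd2 : Matrix.diagonal ![(1:ℚ), 3/10, 6/25, 1/5, 1/15] =
      !![1,0,0,0,0; 0,3/10,0,0,0; 0,0,6/25,0,0; 0,0,0,1/5,0; 0,0,0,0,1/15] := by
    ext i j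
    fin_cases i <;> fin_cases j <;>
      simp [Matrix.diagonal_apply, Matrix.vecHead, Matrix.vecTail]
  rw [hsum1, hd2]
  have h1 : (!![(159:ℚ), -87, 0, -3, -3;
                   38, 14, 1, 2, 1;
                   38, 14, 0, 2, -4;
                   38, 14, -1, 2, 1;
                   15, 45, 0, -3, 5]) * P1 = 1 := by
    rw [hP1]
    ext i j
    fin_cases i <;> fin_cases j <;>
      simp [Matrix.mul_apply, Fin.sum_univ_five, Matrix.vecHead, Matrix.vecTail] <;> norm_num
  have h2 : (!![(18:ℚ), 0, -27, 0, -2;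
                   5, -1, 98, -1, 1;
                   5, 0, -32, 1, 1;
                   0, 1, -52, 0, 0;
                   0, 0, 13, 0, 0]) * P2 = 1 := by
    rw [hP2]
    ext i j
    fin_cases i <;> fin_cases j <;>
      simp [Matrix.mul_apply, Fin.sum_univ_five, Matrix.vecHead, Matrix.vecTail] <;> norm_num
  have hinv1 := Matrix.inv_eq_right_inv h1
  have hinv2 := Matrix.inv_eq_right_inv h2
  refine ⟨?_, ?_, ?_, ?_⟩
  · exact (Matrix.isUnit_iff_isUnit_det _).mpr (Matrix.isUnit_det_of_right_inverse h1)
  · exact (Matrix.isUnit_iff_isUnit_det _).mpr (Matrix.isUnit_det_of_right_inverse h2)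
  · have e1 : (!![(3:ℚ), 0, 0, 0, 0;
                 0, 2, 1, 0, 0;
                 0, 1, 1, 1, 0;
                 0, 0, 1, 2, 0;
                 0, 0, 0, 0, 3]) * (!![2/3, 3/5, 1/10, 3/5, 6/25;
                 1/6, 3/10, 1/10, 1/10, 7/50;
                 0, 0, 2/5, 0, 6/25;
                 1/6, 1/10, 1/10, 3/10, 7/50;
                 0, 0, 3/10, 0, 6/25]) =
        !![2, 9/5, 3/10, 9/5, 18/25;
           1/3, 3/5, 3/5, 1/5, 13/25;
           1/3, 2/5, 3/5, 2/5, 13/25;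
           1/3, 1/5, 3/5, 3/5, 13/25;
           0, 0, 9/10, 0, 18/25] := by
      ext i j
      fin_cases i <;> fin_cases j <;>
        simp [Matrix.mul_apply, Fin.sum_univ_five, Matrix.vecHead, Matrix.vecTail] <;> norm_num
    have e2 : (!![(2:ℚ), 9/5, 3/10, 9/5, 18/25;
           1/3, 3/5, 3/5, 1/5, 13/25;
           1/3, 2/5, 3/5, 2/5, 13/25;
           1/3, 1/5, 3/5, 3/5, 13/25;
           0, 0, 9/10, 0, 18/25]) * (!![(159:ℚ), -87, 0, -3, -3;
                   38, 14, 1, 2, 1;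
                   38, 14, 0, 2, -4;
                   38, 14, -1, 2, 1;
                   15, 45, 0, -3, 5]) =
        (!![(159:ℚ), -87, 0, -3, -3;
                   38, 14, 1, 2, 1;
                   38, 14, 0, 2, -4;
                   38, 14, -1, 2, 1;
                   15, 45, 0, -3, 5]) *
          !![3,0,0,0,0; 0,1,0,0,0; 0,0,2/5,0,0; 0,0,0,3/25,0; 0,0,0,0,0] := by
      ext i j
      fin_cases i <;> fin_cases j <;>
        simp [Matrix.mul_apply, Fin.sum_univ_five, Matrix.vecHead, Matrix.vecTail] <;> norm_num
    rw [hinv1, ← e2, Matrix.mul_assoc, h1, Matrix.mul_one, e1]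
  · have e2 : (!![(2:ℚ)/3, 3/5, 3/5, 3/5, 6/25;
                 1/6, 3/10, 1/10, 0, 7/50;
                 1/6, 1/10, 3/10, 1/10, 7/50;
                 0, 0, 0, 3/10, 6/25;
                 0, 0, 0, 0, 6/25]) * (!![(18:ℚ), 0, -27, 0, -2;
                   5, -1, 98, -1, 1;
                   5, 0, -32, 1, 1;
                   0, 1, -52, 0, 0;
                   0, 0, 13, 0, 0]) =
        (!![(18:ℚ), 0, -27, 0, -2;
                   5, -1, 98, -1, 1;
                   5, 0, -32, 1, 1;
                   0, 1, -52, 0, 0;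
                   0, 0, 13, 0, 0]) *
          !![1,0,0,0,0; 0,3/10,0,0,0; 0,0,6/25,0,0; 0,0,0,1/5,0; 0,0,0,0,1/15] := by
      ext i j
      fin_cases i <;> fin_cases j <;>
        simp [Matrix.mul_apply, Fin.sum_univ_five, Matrix.vecHead, Matrix.vecTail] <;> norm_num
    rw [hinv2, ← e2, Matrix.mul_assoc, h2, Matrix.mul_one]
end
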